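/- Let L, N ∈ ℕ with 1 ≤ N ≤ L+1, let w : {0,…,L} → ℝ be strictly positive, and let p₀, p₁, …, p_L be polynomials with deg p_n = n that are orthogonal with respect to w, i.e. Σ_{x=0}^{L} w(x)p_m(x)p_n(x) = 0 for m ≠ n. Define a probability measure on N-element subsets {z₁ < ⋯ < z_N} of {0,…,L} by P(z₁,…,z_N) = (1/Z)·∏_{1≤i<j≤N}(z_i−z_j)²·∏_{i=1}^N w(z_i), where Z is the normalizing constant. Then for any distinct points x₁ < ⋯ < x_k in {0,…,L}, the probability that the random N-point subset contains all of x₁,…,x_k equals det_{i,j=1,…,k}[K(x_i,x_j)], where K(x,y) = √(w(x)w(y))·Σ_{n=0}^{N−1} p_n(x)p_n(y)/⟨p_n,p_n⟩ and ⟨p_n,p_n⟩ = Σ_{x=0}^{L} w(x)p_n(x)². -/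

import Mathlib

open Finset

/-- The (unnormalized) weight of a finite point configuration `A` in the orthogonal
polynomial ensemble with weight `w`:  `∏_{i<j}(z_i−z_j)² · ∏ w(z_i)`. -/
noncomputable def opeWeight (w : ℕ → ℝ) (A : Finset ℕ) : ℝ :=
  (∏ u ∈ A, ∏ v ∈ A.filter (· < u), ((u : ℝ) - (v : ℝ)) ^ 2) * ∏ u ∈ A, w u

/-- The Christoffel–Darboux kernel
`K(x,y) = √(w(x)w(y)) Σ_{n<N} p_n(x)p_n(y)/⟨p_n,p_n⟩`. -/
noncomputable def cdKernel (L N : ℕ) (w : ℕ → ℝ) (p : ℕ → Polynomial ℝ) (x y : ℕ) : ℝ :=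
  Real.sqrt (w x * w y) *
    ∑ n ∈ Finset.range N,
      (p n).eval (x : ℝ) * (p n).eval (y : ℝ) /
        (∑ u ∈ Finset.range (L + 1), w u * ((p n).eval (u : ℝ)) ^ 2)

namespace OPEAux

lemma sum_det_updateColumn {m : ℕ} (B : Matrix (Fin m) (Fin m) ℝ) (c : Fin m)
    (s : Finset ℕ) (v : ℕ → Fin m → ℝ) :
    ∑ y ∈ s, Matrix.det (B.updateCol c (v y)) = Matrix.det (B.updateCol c (∑ y ∈ s, v y)) := by
  classical
  induction s using Finset.induction with
  | empty =>
    simp only [Finset.sum_empty]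
    exact (Matrix.det_eq_zero_of_column_eq_zero c
      (fun i => by simp [Matrix.updateCol_self])).symm
  | insert _ _ h ih =>
    rw [Finset.sum_insert h, Finset.sum_insert h, Matrix.det_updateCol_add, ih]

/-- Cross-term computation in the one-step integration lemma. -/
lemma cross_term {k' : ℕ} (S : Finset ℕ) (K : ℕ → ℕ → ℝ)
    (hproj : ∀ x ∈ S, ∀ z ∈ S, ∑ y ∈ S, K x y * K y z = K x z)
    (z : Fin (k' + 1) → ℕ) (hz : ∀ i, z i ∈ S) (j' : Fin (k' + 1)) :
    -- note: `Fin.cons y z : Fin (k'+2) → ℕ`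
    ∑ y ∈ S, K y (z j') *
      Matrix.det ((Matrix.of fun i j : Fin (k' + 2) =>
        K ((Fin.cons y z : Fin (k'+2) → ℕ) i) ((Fin.cons y z : Fin (k'+2) → ℕ) j)).submatrix Fin.succ (Fin.succ j').succAbove)
    = (-1 : ℝ) ^ (j' : ℕ) * Matrix.det (Matrix.of fun i j : Fin (k' + 1) => K (z i) (z j)) := by
  classical
  set Kz : Matrix (Fin (k' + 1)) (Fin (k' + 1)) ℝ := Matrix.of fun i j => K (z i) (z j) with hKzdef
  set B : Matrix (Fin (k' + 1)) (Fin (k' + 1)) ℝ :=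
    Matrix.of fun i l => K (z i) ((Fin.cons (z j') z : Fin (k'+2) → ℕ) ((Fin.succ j').succAbove l)) with hBdef
  have hsa0 : (Fin.succ j').succAbove 0 = 0 := by
    rw [Fin.succAbove_of_castSucc_lt _ _ (by simp [Fin.castSucc_zero, Fin.succ_pos])]
    simp
  have claimA : ∀ y, ((Matrix.of fun i j : Fin (k' + 2) =>
      K ((Fin.cons y z : Fin (k'+2) → ℕ) i) ((Fin.cons y z : Fin (k'+2) → ℕ) j)).submatrix Fin.succ (Fin.succ j').succAbove)
      = B.updateCol 0 (fun i => K (z i) y) := by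
    intro y
    ext i l
    by_cases hl : l = 0
    · subst hl
      rw [Matrix.updateCol_self]
      simp [hsa0]
    · rw [Matrix.updateCol_ne hl]
      have hm : (Fin.succ j').succAbove l ≠ 0 := by
        intro h
        exact hl ((Fin.succAbove_right_injective (p := Fin.succ j')) (h.trans hsa0.symm))
      obtain ⟨m', hm'⟩ := Fin.exists_succ_eq_of_ne_zero hm
      simp only [Matrix.submatrix_apply, Matrix.of_apply, Fin.cons_succ, hBdef]
      rw [← hm', Fin.cons_succ, Fin.cons_succ]
  have claimB : B.updateCol 0 (fun i => K (z i) (z j'))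
      = Kz.submatrix id ⇑(j'.cycleRange)⁻¹ := by
    ext i l
    cases l using Fin.cases with
    | zero =>
      rw [Matrix.updateCol_self]
      have : (j'.cycleRange)⁻¹ 0 = j' := by
        rw [Equiv.Perm.inv_eq_iff_eq, Fin.cycleRange_self]
      simp [this, Kz]
    | succ l'' =>
      rw [Matrix.updateCol_ne (Fin.succ_ne_zero l'')]
      simp only [Matrix.submatrix_apply, id, Matrix.of_apply, hBdef, hKzdef]
      congr 1
      by_cases hlj : (l'' : ℕ) < (j' : ℕ)
      · have h1 : (Fin.succ j').succAbove (Fin.succ l'') = Fin.succ (Fin.castSucc l'') := by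
          rw [Fin.succAbove_of_castSucc_lt _ _ (by
            rw [Fin.lt_def]
            simp only [Fin.coe_castSucc, Fin.val_succ]
            omega), Fin.castSucc_fin_succ]
        have h2 : (j'.cycleRange)⁻¹ (Fin.succ l'') = Fin.castSucc l'' := by
          rw [Equiv.Perm.inv_eq_iff_eq, Fin.cycleRange_of_lt (by
            rw [Fin.lt_def]
            simpa using hlj), Fin.coeSucc_eq_succ]
        rw [h1, h2, Fin.cons_succ]
      · have hlj' : j' < Fin.succ l'' := by
          rw [Fin.lt_def]
          simp only [Fin.val_succ]
          omega
        have h1 : (Fin.succ j').succAbove (Fin.succ l'') = Fin.succ (Fin.succ l'') := by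
          rw [Fin.succAbove_of_le_castSucc _ _ (by
            rw [Fin.le_def]
            simp only [Fin.coe_castSucc, Fin.val_succ]
            omega)]
        have h2 : (j'.cycleRange)⁻¹ (Fin.succ l'') = Fin.succ l'' := by
          rw [Equiv.Perm.inv_eq_iff_eq, Fin.cycleRange_of_gt hlj']
        rw [h1, h2, Fin.cons_succ]
  calc ∑ y ∈ S, K y (z j') *
      Matrix.det ((Matrix.of fun i j : Fin (k' + 2) =>
        K ((Fin.cons y z : Fin (k'+2) → ℕ) i) ((Fin.cons y z : Fin (k'+2) → ℕ) j)).submatrix Fin.succ (Fin.succ j').succAbove)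
      = ∑ y ∈ S, Matrix.det (B.updateCol 0 (fun i => K y (z j') • K (z i) y)) := by
        refine Finset.sum_congr rfl fun y _ => ?_
        rw [claimA y, ← Matrix.det_updateCol_smul]
        rfl
    _ = Matrix.det (B.updateCol 0 (∑ y ∈ S, fun i => K y (z j') • K (z i) y)) :=
        sum_det_updateColumn _ _ _ _
    _ = Matrix.det (B.updateCol 0 (fun i => K (z i) (z j'))) := by
        have hcol : (∑ y ∈ S, fun i => K y (z j') • K (z i) y)
            = (fun i : Fin (k' + 1) => K (z i) (z j')) := by
          funext i
          simp only [Finset.sum_apply, smul_eq_mul]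
          rw [← hproj (z i) (hz i) (z j') (hz j')]
          exact Finset.sum_congr rfl fun y _ => mul_comm _ _
        rw [hcol]
    _ = (-1 : ℝ) ^ (j' : ℕ) * Kz.det := by
        rw [claimB, Matrix.det_permute']
        congr 1
        rw [map_inv, Fin.sign_cycleRange]
        simp


lemma onestep {k : ℕ} (S : Finset ℕ) (K : ℕ → ℕ → ℝ) (t : ℝ)
    (htr : ∑ x ∈ S, K x x = t)
    (hproj : ∀ x ∈ S, ∀ z ∈ S, ∑ y ∈ S, K x y * K y z = K x z)
    (z : Fin k → ℕ) (hz : ∀ i, z i ∈ S) :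
    ∑ y ∈ S, Matrix.det (Matrix.of fun i j : Fin (k + 1) =>
        K ((Fin.cons y z : Fin (k + 1) → ℕ) i) ((Fin.cons y z : Fin (k + 1) → ℕ) j))
      = (t - (k : ℝ)) * Matrix.det (Matrix.of fun i j : Fin k => K (z i) (z j)) := by
  classical
  rcases k with _ | k'
  · have h1 : ∀ y ∈ S, Matrix.det (Matrix.of fun i j : Fin (0 + 1) =>
        K ((Fin.cons y z : Fin (0 + 1) → ℕ) i) ((Fin.cons y z : Fin (0 + 1) → ℕ) j)) = K y y := by
      intro y _
      rw [Matrix.det_fin_one, Matrix.of_apply, Fin.cons_zero]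
    rw [Finset.sum_congr rfl h1, htr, Matrix.det_fin_zero]
    norm_num
  · set Kz : Matrix (Fin (k' + 1)) (Fin (k' + 1)) ℝ := Matrix.of fun i j => K (z i) (z j)
      with hKzdef
    have expand : ∀ y ∈ S, Matrix.det (Matrix.of fun i j : Fin (k' + 1 + 1) =>
        K ((Fin.cons y z : Fin (k' + 1 + 1) → ℕ) i) ((Fin.cons y z : Fin (k' + 1 + 1) → ℕ) j))
        = ∑ j : Fin (k' + 2), (-1 : ℝ) ^ (j : ℕ) *
            K y ((Fin.cons y z : Fin (k' + 2) → ℕ) j) *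
            Matrix.det ((Matrix.of fun i j : Fin (k' + 2) =>
              K ((Fin.cons y z : Fin (k' + 2) → ℕ) i)
                ((Fin.cons y z : Fin (k' + 2) → ℕ) j)).submatrix Fin.succ j.succAbove) := by
      intro y _
      rw [Matrix.det_succ_row_zero]
      exact Finset.sum_congr rfl fun j _ => by rw [Matrix.of_apply, Fin.cons_zero]
    rw [Finset.sum_congr rfl expand, Finset.sum_comm, Fin.sum_univ_succ]
    have h0 : ∑ y ∈ S, (-1 : ℝ) ^ ((0 : Fin (k' + 2)) : ℕ) *
        K y ((Fin.cons y z : Fin (k' + 2) → ℕ) 0) *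
        Matrix.det ((Matrix.of fun i j : Fin (k' + 2) =>
          K ((Fin.cons y z : Fin (k' + 2) → ℕ) i)
            ((Fin.cons y z : Fin (k' + 2) → ℕ) j)).submatrix Fin.succ
              (0 : Fin (k' + 2)).succAbove) = t * Kz.det := by
      have hm : ∀ y : ℕ, ((Matrix.of fun i j : Fin (k' + 2) =>
          K ((Fin.cons y z : Fin (k' + 2) → ℕ) i)
            ((Fin.cons y z : Fin (k' + 2) → ℕ) j)).submatrix Fin.succ
              (0 : Fin (k' + 2)).succAbove) = Kz := by
        intro y
        ext i l
        simp [Fin.succAbove_zero, Fin.cons_succ, hKzdef]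
      simp only [hm, Fin.val_zero, pow_zero, one_mul, Fin.cons_zero]
      rw [← Finset.sum_mul, htr]
    have hcross : ∀ j' : Fin (k' + 1), ∑ y ∈ S, (-1 : ℝ) ^ ((Fin.succ j' : Fin (k' + 2)) : ℕ) *
        K y ((Fin.cons y z : Fin (k' + 2) → ℕ) (Fin.succ j')) *
        Matrix.det ((Matrix.of fun i j : Fin (k' + 2) =>
          K ((Fin.cons y z : Fin (k' + 2) → ℕ) i)
            ((Fin.cons y z : Fin (k' + 2) → ℕ) j)).submatrix Fin.succ
              (Fin.succ j').succAbove) = -Kz.det := by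
      intro j'
      have : ∀ y ∈ S, (-1 : ℝ) ^ ((Fin.succ j' : Fin (k' + 2)) : ℕ) *
          K y ((Fin.cons y z : Fin (k' + 2) → ℕ) (Fin.succ j')) *
          Matrix.det ((Matrix.of fun i j : Fin (k' + 2) =>
            K ((Fin.cons y z : Fin (k' + 2) → ℕ) i)
              ((Fin.cons y z : Fin (k' + 2) → ℕ) j)).submatrix Fin.succ
                (Fin.succ j').succAbove)
          = (-1 : ℝ) ^ ((j' : ℕ) + 1) * (K y (z j') *
            Matrix.det ((Matrix.of fun i j : Fin (k' + 2) =>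
              K ((Fin.cons y z : Fin (k' + 2) → ℕ) i)
                ((Fin.cons y z : Fin (k' + 2) → ℕ) j)).submatrix Fin.succ
                  (Fin.succ j').succAbove)) := by
        intro y _
        rw [Fin.cons_succ, Fin.val_succ, mul_assoc]
      rw [Finset.sum_congr rfl this, ← Finset.mul_sum,
        cross_term S K hproj z hz j']
      rw [← mul_assoc, ← pow_add]
      have hodd : Odd ((j' : ℕ) + 1 + (j' : ℕ)) := ⟨(j' : ℕ), by ring⟩
      rw [hodd.neg_one_pow]
      ring
    rw [h0, Finset.sum_congr rfl (fun j' _ => hcross j')]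
    simp only [Finset.sum_const, Finset.card_univ, Fintype.card_fin, nsmul_eq_mul]
    push_cast
    ring


noncomputable def detT {m : ℕ} (K : ℕ → ℕ → ℝ) (v : Fin m → ℕ) : ℝ :=
  Matrix.det (Matrix.of fun i j => K (v i) (v j))

noncomputable def detK (K : ℕ → ℕ → ℝ) (X : Finset ℕ) : ℝ :=
  detT K (fun i : Fin X.card => X.orderEmbOfFin rfl i)

lemma detT_comp_equiv {m m' : ℕ} (K : ℕ → ℕ → ℝ) (v : Fin m → ℕ) (e : Fin m' ≃ Fin m) :
    detT K (v ∘ e) = detT K v := by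
  unfold detT
  exact Matrix.det_submatrix_equiv_self e (Matrix.of fun i j => K (v i) (v j))

lemma detT_eq_detK (K : ℕ → ℕ → ℝ) {m : ℕ} (v : Fin m → ℕ) (hv : Function.Injective v)
    (X : Finset ℕ) (hX : Finset.univ.image v = X) : detT K v = detK K X := by
  have hc : X.card = m := by
    rw [← hX, Finset.card_image_of_injective _ hv, Finset.card_univ, Fintype.card_fin]
  set a : Fin X.card → ℕ := fun i => X.orderEmbOfFin rfl i with ha
  have hainj : Function.Injective a := fun i j h => (X.orderEmbOfFin rfl).injective h
  have hvm : ∀ i, v i ∈ X := fun i => by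
    rw [← hX]; exact Finset.mem_image_of_mem _ (Finset.mem_univ i)
  have ham : ∀ i, a i ∈ X := fun i => X.orderEmbOfFin_mem rfl i
  let f : Fin m → X := fun i => ⟨v i, hvm i⟩
  let g : Fin X.card → X := fun i => ⟨a i, ham i⟩
  have hf : Function.Bijective f := by
    rw [Fintype.bijective_iff_injective_and_card]
    refine ⟨fun i j h => hv (congrArg Subtype.val h), ?_⟩
    simp [Fintype.card_coe, hc]
  have hg : Function.Bijective g := by
    rw [Fintype.bijective_iff_injective_and_card]
    refine ⟨fun i j h => hainj (congrArg Subtype.val h), ?_⟩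
    simp [Fintype.card_coe]
  let e : Fin m ≃ Fin X.card := (Equiv.ofBijective f hf).trans (Equiv.ofBijective g hg).symm
  have hae : ∀ i, a (e i) = v i := by
    intro i
    have : g (e i) = f i := by
      show g ((Equiv.ofBijective g hg).symm (Equiv.ofBijective f hf i)) = f i
      exact (Equiv.ofBijective g hg).apply_symm_apply _
    exact congrArg Subtype.val this
  rw [detK, ← detT_comp_equiv K a e]
  unfold detT
  congr 1
  ext i j
  simp [Function.comp, hae]

lemma detT_eq_zero_of_not_injective {m : ℕ} (K : ℕ → ℕ → ℝ) (v : Fin m → ℕ)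
    (hv : ¬ Function.Injective v) : detT K v = 0 := by
  simp only [Function.Injective, not_forall] at hv
  obtain ⟨i, j, hij, hne⟩ := hv
  exact Matrix.det_zero_of_row_eq hne (by funext l; simp [hij])

lemma keyFinset (S : Finset ℕ) (K : ℕ → ℕ → ℝ) (N : ℕ)
    (htr : ∑ x ∈ S, K x x = (N : ℝ))
    (hproj : ∀ x ∈ S, ∀ z ∈ S, ∑ y ∈ S, K x y * K y z = K x z) :
    ∀ d (X : Finset ℕ), X ⊆ S → X.card + d = N →
      ∑ A ∈ (S.powersetCard N).filter (fun A => X ⊆ A), detK K A = detK K X := by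
  classical
  intro d
  induction d with
  | zero =>
    intro X hXS hcard
    have hfilt : (S.powersetCard N).filter (fun A => X ⊆ A) = {X} := by
      ext A
      simp only [Finset.mem_filter, Finset.mem_powersetCard, Finset.mem_singleton]
      constructor
      · rintro ⟨⟨hAS, hAc⟩, hXA⟩
        exact (Finset.eq_of_subset_of_card_le hXA (by omega)).symm
      · rintro rfl
        exact ⟨⟨hXS, by omega⟩, Finset.Subset.refl _⟩
    rw [hfilt, Finset.sum_singleton]
  | succ d ih =>
    intro X hXS hcard
    set k := X.card with hk
    have count : ∑ y ∈ S \ X, ∑ A ∈ (S.powersetCard N).filter (fun A => insert y X ⊆ A), detK K A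
        = ((d : ℝ) + 1) * ∑ A ∈ (S.powersetCard N).filter (fun A => X ⊆ A), detK K A := by
      have hf1 : ∀ y, (S.powersetCard N).filter (fun A => insert y X ⊆ A)
          = ((S.powersetCard N).filter (fun A => X ⊆ A)).filter (fun A => y ∈ A) := by
        intro y
        rw [Finset.filter_filter]
        apply Finset.filter_congr
        intro A _
        rw [Finset.insert_subset_iff]
        tauto
      calc ∑ y ∈ S \ X, ∑ A ∈ (S.powersetCard N).filter (fun A => insert y X ⊆ A), detK K A
          = ∑ y ∈ S \ X, ∑ A ∈ (S.powersetCard N).filter (fun A => X ⊆ A),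
              (if y ∈ A then detK K A else 0) := by
            refine Finset.sum_congr rfl fun y _ => ?_
            rw [hf1 y, Finset.sum_filter]
        _ = ∑ A ∈ (S.powersetCard N).filter (fun A => X ⊆ A),
              ∑ y ∈ S \ X, (if y ∈ A then detK K A else 0) := Finset.sum_comm
        _ = ∑ A ∈ (S.powersetCard N).filter (fun A => X ⊆ A), ((d : ℝ) + 1) * detK K A := by
            refine Finset.sum_congr rfl fun A hA => ?_
            simp only [Finset.mem_filter, Finset.mem_powersetCard] at hA
            obtain ⟨⟨hAS, hAc⟩, hXA⟩ := hA
            rw [Finset.sum_ite_mem, Finset.sum_const]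
            have h2 : S \ X ∩ A = A \ X := by
              ext u
              simp only [Finset.mem_inter, Finset.mem_sdiff]
              constructor
              · rintro ⟨⟨_, hux⟩, hua⟩
                exact ⟨hua, hux⟩
              · rintro ⟨hua, hux⟩
                exact ⟨⟨hAS hua, hux⟩, hua⟩
            have h3 : (A \ X).card = d + 1 := by
              rw [Finset.card_sdiff_of_subset hXA, hAc, ← hk]
              omega
            rw [h2, h3, nsmul_eq_mul]
            push_cast
            ring
        _ = ((d : ℝ) + 1) * ∑ A ∈ (S.powersetCard N).filter (fun A => X ⊆ A), detK K A := by
            rw [Finset.mul_sum]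
    have ihs : ∀ y ∈ S \ X,
        ∑ A ∈ (S.powersetCard N).filter (fun A => insert y X ⊆ A), detK K A
          = detK K (insert y X) := by
      intro y hy
      rw [Finset.mem_sdiff] at hy
      exact ih (insert y X) (Finset.insert_subset hy.1 hXS)
        (by rw [Finset.card_insert_of_notMem hy.2, ← hk]; omega)
    set a : Fin X.card → ℕ := fun i => X.orderEmbOfFin rfl i with ha
    have hainj : Function.Injective a := fun i j h => (X.orderEmbOfFin rfl).injective h
    have haimg : Finset.univ.image a = X := by
      apply Finset.coe_injective
      rw [Finset.coe_image, Finset.coe_univ, Set.image_univ]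
      exact X.range_orderEmbOfFin rfl
    have hamem : ∀ i, a i ∈ S := fun i => hXS (X.orderEmbOfFin_mem rfl i)
    have hrange : Set.range a = ↑X := X.range_orderEmbOfFin rfl
    have step : ∑ y ∈ S \ X, detK K (insert y X) = ((N : ℝ) - k) * detK K X := by
      have hins : ∀ y ∈ S \ X, detK K (insert y X)
          = detT K (Fin.cons y a : Fin (X.card + 1) → ℕ) := by
        intro y hy
        rw [Finset.mem_sdiff] at hy
        refine (detT_eq_detK K _ ?_ _ ?_).symm
        · rw [Fin.cons_injective_iff]
          refine ⟨?_, hainj⟩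
          rw [hrange]
          exact fun h => hy.2 h
        · apply Finset.coe_injective
          rw [Finset.coe_image, Finset.coe_univ, Set.image_univ, Fin.range_cons, hrange,
            Finset.coe_insert]
      calc ∑ y ∈ S \ X, detK K (insert y X)
          = ∑ y ∈ S \ X, detT K (Fin.cons y a : Fin (X.card + 1) → ℕ) :=
            Finset.sum_congr rfl hins
        _ = ∑ y ∈ S, detT K (Fin.cons y a : Fin (X.card + 1) → ℕ) := by
            have hzero : ∑ y ∈ X, detT K (Fin.cons y a : Fin (X.card + 1) → ℕ) = 0 := by
              refine Finset.sum_eq_zero fun y hyX => ?_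
              obtain ⟨i0, _, hi0⟩ := Finset.mem_image.mp (haimg ▸ hyX)
              refine detT_eq_zero_of_not_injective K _ fun hInj => ?_
              have h1 : (Fin.cons y a : Fin (X.card + 1) → ℕ) (Fin.succ i0)
                  = (Fin.cons y a : Fin (X.card + 1) → ℕ) 0 := by
                rw [Fin.cons_succ, Fin.cons_zero, hi0]
              exact Fin.succ_ne_zero i0 (hInj h1)
            rw [← Finset.sum_sdiff hXS, hzero, add_zero]
        _ = ((N : ℝ) - (X.card : ℝ)) * detT K a :=
            onestep S K ((N : ℕ) : ℝ) htr hproj a hamem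
        _ = ((N : ℝ) - k) * detK K X := by
            rw [detT_eq_detK K a hainj X haimg, hk]
    have hNk : ((N : ℝ) - (k : ℝ)) = ((d : ℝ) + 1) := by
      have h5 : k + (d + 1) = N := hcard
      have h6 : (k : ℝ) + ((d : ℝ) + 1) = (N : ℝ) := by exact_mod_cast congrArg (Nat.cast : ℕ → ℝ) h5
      linarith
    have hne : ((d : ℝ) + 1) ≠ 0 := by positivity
    apply mul_left_cancel₀ hne
    rw [← count, Finset.sum_congr rfl ihs, step, hNk]


noncomputable def nu (L : ℕ) (w : ℕ → ℝ) (p : ℕ → Polynomial ℝ) (n : ℕ) : ℝ :=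
  ∑ u ∈ Finset.range (L + 1), w u * ((p n).eval (u : ℝ)) ^ 2

noncomputable def phi (L : ℕ) (w : ℕ → ℝ) (p : ℕ → Polynomial ℝ) (n x : ℕ) : ℝ :=
  Real.sqrt (w x) * (p n).eval (x : ℝ) * (Real.sqrt (nu L w p n))⁻¹

section OPE

variable (L N : ℕ) (w : ℕ → ℝ) (p : ℕ → Polynomial ℝ)

lemma nu_pos (hw : ∀ x ≤ L, 0 < w x) (hdeg : ∀ n ≤ L, (p n).degree = (n : ℕ))
    {n : ℕ} (hn : n ≤ L) : 0 < nu L w p n := by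
  have hdn : (p n).natDegree = n := Polynomial.natDegree_eq_of_degree_eq_some (hdeg n hn)
  have hnz : ∃ u ∈ Finset.range (L + 1), (p n).eval (u : ℝ) ≠ 0 := by
    by_contra hcon
    push_neg at hcon
    have hp0 : p n = 0 := by
      apply Polynomial.eq_zero_of_natDegree_lt_card_of_eval_eq_zero' (p n)
        ((Finset.range (L + 1)).image (fun u : ℕ => (u : ℝ)))
      · intro x hx
        obtain ⟨u, hu, rfl⟩ := Finset.mem_image.mp hx
        exact hcon u hu
      · rw [Finset.card_image_of_injective _ Nat.cast_injective, Finset.card_range, hdn]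
        omega
    have hd := hdeg n hn
    rw [hp0, Polynomial.degree_zero] at hd
    exact absurd hd.symm (by simp)
  obtain ⟨u0, hu0, hu0ne⟩ := hnz
  apply Finset.sum_pos'
  · intro u hu
    have hwu := hw u (by simpa [Nat.lt_succ_iff] using Finset.mem_range.mp hu)
    positivity
  · refine ⟨u0, hu0, ?_⟩
    have hwu := hw u0 (by simpa [Nat.lt_succ_iff] using Finset.mem_range.mp hu0)
    positivity

lemma phi_orth (hw : ∀ x ≤ L, 0 < w x) (hdeg : ∀ n ≤ L, (p n).degree = (n : ℕ))
    (horth : ∀ m ≤ L, ∀ n ≤ L, m ≠ n →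
      ∑ x ∈ Finset.range (L + 1), w x * (p m).eval (x : ℝ) * (p n).eval (x : ℝ) = 0)
    {m n : ℕ} (hm : m ≤ L) (hn : n ≤ L) :
    ∑ x ∈ Finset.range (L + 1), phi L w p m x * phi L w p n x
      = if m = n then 1 else 0 := by
  have hterm : ∀ x ∈ Finset.range (L + 1), phi L w p m x * phi L w p n x
      = (Real.sqrt (nu L w p m))⁻¹ * (Real.sqrt (nu L w p n))⁻¹ *
        (w x * (p m).eval (x : ℝ) * (p n).eval (x : ℝ)) := by
    intro x hx
    have hwx : 0 ≤ w x := (hw x (by simpa [Nat.lt_succ_iff] using Finset.mem_range.mp hx)).le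
    have h1 : phi L w p m x * phi L w p n x
        = Real.sqrt (w x) * Real.sqrt (w x) *
          ((Real.sqrt (nu L w p m))⁻¹ * (Real.sqrt (nu L w p n))⁻¹) *
          ((p m).eval (x : ℝ) * (p n).eval (x : ℝ)) := by
      unfold phi
      ring
    rw [h1, Real.mul_self_sqrt hwx]
    ring
  rw [Finset.sum_congr rfl hterm, ← Finset.mul_sum]
  by_cases hmn : m = n
  · subst hmn
    have hsum : ∑ x ∈ Finset.range (L + 1), w x * (p m).eval (x : ℝ) * (p m).eval (x : ℝ)
        = nu L w p m := by
      unfold nu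
      exact Finset.sum_congr rfl fun x _ => by ring
    rw [hsum]
    have hpos := nu_pos L w p hw hdeg hm
    rw [← mul_inv, Real.mul_self_sqrt hpos.le, inv_mul_cancel₀ hpos.ne']
    simp
  · rw [horth m hm n hn hmn]
    simp [hmn]

lemma cdKernel_eq (hw : ∀ x ≤ L, 0 < w x) (hdeg : ∀ n ≤ L, (p n).degree = (n : ℕ))
    (hNL : N ≤ L + 1) {x y : ℕ} (hx : x ≤ L) (hy : y ≤ L) :
    cdKernel L N w p x y = ∑ n ∈ Finset.range N, phi L w p n x * phi L w p n y := by
  unfold cdKernel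
  rw [Real.sqrt_mul (hw x hx).le, Finset.mul_sum]
  refine Finset.sum_congr rfl fun n hn => ?_
  have hnL : n ≤ L := by
    have := Finset.mem_range.mp hn
    omega
  have hpos := nu_pos L w p hw hdeg hnL
  have h2 : (Real.sqrt (nu L w p n))⁻¹ * (Real.sqrt (nu L w p n))⁻¹ = (nu L w p n)⁻¹ := by
    rw [← mul_inv, Real.mul_self_sqrt hpos.le]
  have h3 : (∑ u ∈ Finset.range (L + 1), w u * ((p n).eval (u : ℝ)) ^ 2) = nu L w p n := rfl
  rw [h3, div_eq_mul_inv, ← h2]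
  unfold phi
  ring

lemma cd_proj (hw : ∀ x ≤ L, 0 < w x) (hdeg : ∀ n ≤ L, (p n).degree = (n : ℕ))
    (horth : ∀ m ≤ L, ∀ n ≤ L, m ≠ n →
      ∑ x ∈ Finset.range (L + 1), w x * (p m).eval (x : ℝ) * (p n).eval (x : ℝ) = 0)
    (hNL : N ≤ L + 1) :
    ∀ x ∈ Finset.range (L + 1), ∀ z ∈ Finset.range (L + 1),
      ∑ y ∈ Finset.range (L + 1), cdKernel L N w p x y * cdKernel L N w p y z
        = cdKernel L N w p x z := by
  intro x hx z hz
  have hxL : x ≤ L := by simpa [Nat.lt_succ_iff] using Finset.mem_range.mp hx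
  have hzL : z ≤ L := by simpa [Nat.lt_succ_iff] using Finset.mem_range.mp hz
  have key : ∀ y ∈ Finset.range (L + 1), cdKernel L N w p x y * cdKernel L N w p y z
      = ∑ n ∈ Finset.range N, ∑ m ∈ Finset.range N,
          (phi L w p n x * phi L w p n y) * (phi L w p m y * phi L w p m z) := by
    intro y hy
    have hyL : y ≤ L := by simpa [Nat.lt_succ_iff] using Finset.mem_range.mp hy
    rw [cdKernel_eq L N w p hw hdeg hNL hxL hyL, cdKernel_eq L N w p hw hdeg hNL hyL hzL,
      Finset.sum_mul_sum]
  rw [Finset.sum_congr rfl key, Finset.sum_comm]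
  have inner : ∀ n ∈ Finset.range N,
      (∑ y ∈ Finset.range (L + 1), ∑ m ∈ Finset.range N,
        (phi L w p n x * phi L w p n y) * (phi L w p m y * phi L w p m z))
      = phi L w p n x * phi L w p n z := by
    intro n hn
    have hnL : n ≤ L := by
      have := Finset.mem_range.mp hn
      omega
    rw [Finset.sum_comm]
    have inner2 : ∀ m ∈ Finset.range N,
        (∑ y ∈ Finset.range (L + 1),
          (phi L w p n x * phi L w p n y) * (phi L w p m y * phi L w p m z))
        = (phi L w p n x * phi L w p m z) * (if n = m then 1 else 0) := by
      intro m hm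
      have hmL : m ≤ L := by
        have := Finset.mem_range.mp hm
        omega
      rw [← phi_orth L w p hw hdeg horth hnL hmL, Finset.mul_sum]
      exact Finset.sum_congr rfl fun y _ => by ring
    rw [Finset.sum_congr rfl inner2]
    have : ∀ m ∈ Finset.range N,
        (phi L w p n x * phi L w p m z) * (if n = m then 1 else 0)
        = if n = m then phi L w p n x * phi L w p m z else 0 := by
      intro m _
      by_cases h : n = m <;> simp [h]
    rw [Finset.sum_congr rfl this, Finset.sum_ite_eq]
    simp [hn]
  rw [Finset.sum_congr rfl inner, ← cdKernel_eq L N w p hw hdeg hNL hxL hzL]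

lemma cd_trace (hw : ∀ x ≤ L, 0 < w x) (hdeg : ∀ n ≤ L, (p n).degree = (n : ℕ))
    (horth : ∀ m ≤ L, ∀ n ≤ L, m ≠ n →
      ∑ x ∈ Finset.range (L + 1), w x * (p m).eval (x : ℝ) * (p n).eval (x : ℝ) = 0)
    (hNL : N ≤ L + 1) :
    ∑ x ∈ Finset.range (L + 1), cdKernel L N w p x x = (N : ℝ) := by
  have key : ∀ x ∈ Finset.range (L + 1), cdKernel L N w p x x
      = ∑ n ∈ Finset.range N, phi L w p n x * phi L w p n x := by
    intro x hx
    have hxL : x ≤ L := by simpa [Nat.lt_succ_iff] using Finset.mem_range.mp hx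
    exact cdKernel_eq L N w p hw hdeg hNL hxL hxL
  rw [Finset.sum_congr rfl key, Finset.sum_comm]
  have : ∀ n ∈ Finset.range N,
      (∑ x ∈ Finset.range (L + 1), phi L w p n x * phi L w p n x) = 1 := by
    intro n hn
    have hnL : n ≤ L := by
      have := Finset.mem_range.mp hn
      omega
    rw [phi_orth L w p hw hdeg horth hnL hnL]
    simp
  rw [Finset.sum_congr rfl this]
  simp

end OPE

end OPEAux
section OPE2

open OPEAux Polynomial

variable (L N : ℕ) (w : ℕ → ℝ) (p : ℕ → Polynomial ℝ)

lemma lc_ne_zero (hdeg : ∀ n ≤ L, (p n).degree = (n : ℕ)) {n : ℕ} (hn : n ≤ L) :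
    (p n).leadingCoeff ≠ 0 := by
  rw [Polynomial.leadingCoeff_ne_zero]
  intro h0
  have hd := hdeg n hn
  rw [h0, Polynomial.degree_zero] at hd
  exact absurd hd.symm (by simp)

lemma weight_eq (hw : ∀ x ≤ L, 0 < w x) (hdeg : ∀ n ≤ L, (p n).degree = (n : ℕ))
    (hNL : N ≤ L + 1) (A : Finset ℕ) (hAS : A ⊆ Finset.range (L + 1)) (hAc : A.card = N) :
    opeWeight w A
      = (∏ n ∈ Finset.range N, nu L w p n / (p n).leadingCoeff ^ 2) *
        detK (cdKernel L N w p) A := by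
  classical
  set a : Fin N → ℕ := fun i => A.orderEmbOfFin hAc i with ha
  have hainj : Function.Injective a := fun i j h => (A.orderEmbOfFin hAc).injective h
  have hamono : StrictMono a := (A.orderEmbOfFin hAc).strictMono
  have haimg : Finset.univ.image a = A := by
    apply Finset.coe_injective
    rw [Finset.coe_image, Finset.coe_univ, Set.image_univ]
    exact A.range_orderEmbOfFin hAc
  have haL : ∀ i, a i ≤ L := fun i => by
    have := hAS (A.orderEmbOfFin_mem hAc i)
    simpa [Nat.lt_succ_iff] using Finset.mem_range.mp this
  have hnL : ∀ n : Fin N, (n : ℕ) ≤ L := fun n => by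
    have := n.isLt
    omega
  have hlcne : ∀ n : Fin N, (p (n : ℕ)).leadingCoeff ≠ 0 :=
    fun n => lc_ne_zero L p hdeg (hnL n)
  have hνpos : ∀ n : Fin N, 0 < nu L w p (n : ℕ) :=
    fun n => nu_pos L w p hw hdeg (hnL n)
  -- the kernel matrix as a Gram matrix
  set P : Matrix (Fin N) (Fin N) ℝ :=
    Matrix.of fun i n : Fin N => phi L w p (n : ℕ) (a i) with hP
  have hdetKA : detK (cdKernel L N w p) A = P.det * P.det := by
    rw [← detT_eq_detK (cdKernel L N w p) a hainj A haimg]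
    unfold detT
    have hM : (Matrix.of fun i j : Fin N => cdKernel L N w p (a i) (a j)) = P * P.transpose := by
      ext i j
      rw [Matrix.mul_apply]
      rw [Matrix.of_apply, cdKernel_eq L N w p hw hdeg hNL (haL i) (haL j),
        ← Fin.sum_univ_eq_sum_range (fun n => phi L w p n (a i) * phi L w p n (a j)) N]
      exact Finset.sum_congr rfl fun n _ => rfl
    rw [hM, Matrix.det_mul, Matrix.det_transpose]
  -- compute det P
  set q : Fin N → Polynomial ℝ := fun n => Polynomial.C ((p (n : ℕ)).leadingCoeff)⁻¹ * p (n : ℕ)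
    with hq
  have hq_deg : ∀ n : Fin N, (q n).natDegree = (n : ℕ) := by
    intro n
    rw [hq]
    rw [Polynomial.natDegree_C_mul (inv_ne_zero (hlcne n))]
    exact Polynomial.natDegree_eq_of_degree_eq_some (hdeg (n : ℕ) (hnL n))
  have hq_monic : ∀ n : Fin N, (q n).Monic := by
    intro n
    have h1 : (Polynomial.C ((p (n : ℕ)).leadingCoeff)⁻¹).leadingCoeff *
        (p (n : ℕ)).leadingCoeff ≠ 0 := by
      rw [Polynomial.leadingCoeff_C, inv_mul_cancel₀ (hlcne n)]
      exact one_ne_zero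
    rw [Polynomial.Monic.def, hq]
    rw [Polynomial.leadingCoeff_mul' h1, Polynomial.leadingCoeff_C,
      inv_mul_cancel₀ (hlcne n)]
  set vR : Fin N → ℝ := fun i => ((a i : ℕ) : ℝ) with hvR
  set V : ℝ := (Matrix.vandermonde vR).det with hV
  set E : Matrix (Fin N) (Fin N) ℝ :=
    Matrix.of fun i n : Fin N => (p ((n : Fin N) : ℕ)).eval (vR i) with hE
  have hE2 : E.det = (∏ n : Fin N, (p (n : ℕ)).leadingCoeff) * V := by
    have hEq : E = Matrix.of fun i n : Fin N =>
        (p ((n : Fin N) : ℕ)).leadingCoeff * ((Matrix.of fun i n : Fin N =>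
          (q n).eval (vR i)) i n) := by
      ext i n
      simp only [Matrix.of_apply, hE, hq, Polynomial.eval_mul, Polynomial.eval_C]
      rw [← mul_assoc, mul_inv_cancel₀ (hlcne n), one_mul]
    rw [hEq, Matrix.det_mul_row, hV,
      Matrix.det_eval_matrixOfPolynomials_eq_det_vandermonde vR q hq_deg hq_monic]
  have hPdet : P.det = (∏ i : Fin N, Real.sqrt (w (a i))) *
      ((∏ n : Fin N, (Real.sqrt (nu L w p (n : ℕ)))⁻¹) *
        ((∏ n : Fin N, (p (n : ℕ)).leadingCoeff) * V)) := by
    have h1 : P = Matrix.of fun i n : Fin N => Real.sqrt (w (a i)) *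
        ((Matrix.of fun i n : Fin N => (Real.sqrt (nu L w p (n : ℕ)))⁻¹ * (E i n)) i n) := by
      ext i n
      simp only [Matrix.of_apply, hP, hE]
      unfold phi
      ring
    rw [h1, Matrix.det_mul_column, Matrix.det_mul_row, hE2]
  -- the Vandermonde double product
  have hVV : V * V = ∏ i : Fin N, ∏ j ∈ Finset.Ioi i, (vR j - vR i) ^ 2 := by
    rw [hV, Matrix.det_vandermonde, ← Finset.prod_mul_distrib]
    refine Finset.prod_congr rfl fun i _ => ?_
    rw [← Finset.prod_mul_distrib]
    exact Finset.prod_congr rfl fun j _ => by ring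
  -- rewrite opeWeight through the enumeration
  have hfilt : ∀ i : Fin N, A.filter (· < a i)
      = Finset.image a (Finset.univ.filter (fun j => j < i)) := by
    intro i
    ext v
    simp only [Finset.mem_filter, Finset.mem_image, Finset.mem_univ, true_and]
    constructor
    · rintro ⟨hvA, hlt⟩
      obtain ⟨j, _, rfl⟩ := Finset.mem_image.mp (haimg ▸ hvA)
      exact ⟨j, hamono.lt_iff_lt.mp hlt, rfl⟩
    · rintro ⟨j, hj, rfl⟩
      exact ⟨haimg ▸ Finset.mem_image_of_mem a (Finset.mem_univ j), hamono hj⟩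
  have hope : opeWeight w A
      = (∏ i : Fin N, ∏ j ∈ Finset.univ.filter (fun j => j < i), ((a i : ℝ) - (a j : ℝ)) ^ 2) *
        ∏ i : Fin N, w (a i) := by
    unfold opeWeight
    rw [← haimg, Finset.prod_image (fun x _ y _ h => hainj h),
      Finset.prod_image (fun x _ y _ h => hainj h)]
    congr 1
    refine Finset.prod_congr rfl fun i _ => ?_
    rw [haimg, hfilt i, Finset.prod_image (fun x _ y _ h => hainj h)]
  have hswap : (∏ i : Fin N, ∏ j ∈ Finset.univ.filter (fun j => j < i),
      ((a i : ℝ) - (a j : ℝ)) ^ 2)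
      = ∏ i : Fin N, ∏ j ∈ Finset.Ioi i, ((a j : ℝ) - (a i : ℝ)) ^ 2 :=
    Finset.prod_comm' (fun x y => by
      simp only [Finset.mem_filter, Finset.mem_univ, true_and, Finset.mem_Ioi, and_true])
  -- combine everything
  have hWW : (∏ i : Fin N, Real.sqrt (w (a i))) * (∏ i : Fin N, Real.sqrt (w (a i)))
      = ∏ i : Fin N, w (a i) := by
    rw [← Finset.prod_mul_distrib]
    exact Finset.prod_congr rfl fun i _ => Real.mul_self_sqrt (hw (a i) (haL i)).le
  have hconst : (∏ n ∈ Finset.range N, nu L w p n / (p n).leadingCoeff ^ 2) *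
      (((∏ n : Fin N, (Real.sqrt (nu L w p (n : ℕ)))⁻¹) *
        (∏ n : Fin N, (Real.sqrt (nu L w p (n : ℕ)))⁻¹)) *
       ((∏ n : Fin N, (p (n : ℕ)).leadingCoeff) * (∏ n : Fin N, (p (n : ℕ)).leadingCoeff))) = 1 := by
    have hII : (∏ n : Fin N, (Real.sqrt (nu L w p (n : ℕ)))⁻¹) *
        (∏ n : Fin N, (Real.sqrt (nu L w p (n : ℕ)))⁻¹)
        = ∏ n : Fin N, (nu L w p (n : ℕ))⁻¹ := by
      rw [← Finset.prod_mul_distrib]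
      exact Finset.prod_congr rfl fun n _ => by
        rw [← mul_inv, Real.mul_self_sqrt (hνpos n).le]
    have hLL : (∏ n : Fin N, (p (n : ℕ)).leadingCoeff) * (∏ n : Fin N, (p (n : ℕ)).leadingCoeff)
        = ∏ n : Fin N, (p (n : ℕ)).leadingCoeff ^ 2 := by
      rw [← Finset.prod_mul_distrib]
      exact Finset.prod_congr rfl fun n _ => (sq _).symm
    rw [hII, hLL, ← Fin.prod_univ_eq_prod_range (fun n => nu L w p n / (p n).leadingCoeff ^ 2) N,
      ← Finset.prod_mul_distrib, ← Finset.prod_mul_distrib]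
    refine Finset.prod_eq_one fun n _ => ?_
    have h1 : nu L w p (n : ℕ) ≠ 0 := (hνpos n).ne'
    have h2 : (p (n : ℕ)).leadingCoeff ≠ 0 := hlcne n
    field_simp
  rw [hope, hswap, hdetKA, hPdet]
  have : (∏ n ∈ Finset.range N, nu L w p n / (p n).leadingCoeff ^ 2) *
      ((∏ i : Fin N, Real.sqrt (w (a i))) *
        ((∏ n : Fin N, (Real.sqrt (nu L w p (n : ℕ)))⁻¹) *
          ((∏ n : Fin N, (p (n : ℕ)).leadingCoeff) * V)) *
       ((∏ i : Fin N, Real.sqrt (w (a i))) *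
        ((∏ n : Fin N, (Real.sqrt (nu L w p (n : ℕ)))⁻¹) *
          ((∏ n : Fin N, (p (n : ℕ)).leadingCoeff) * V))))
      = ((∏ n ∈ Finset.range N, nu L w p n / (p n).leadingCoeff ^ 2) *
          (((∏ n : Fin N, (Real.sqrt (nu L w p (n : ℕ)))⁻¹) *
            (∏ n : Fin N, (Real.sqrt (nu L w p (n : ℕ)))⁻¹)) *
           ((∏ n : Fin N, (p (n : ℕ)).leadingCoeff) * (∏ n : Fin N, (p (n : ℕ)).leadingCoeff)))) *
        (((∏ i : Fin N, Real.sqrt (w (a i))) * (∏ i : Fin N, Real.sqrt (w (a i)))) * (V * V)) := by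
    ring
  rw [this, hconst, one_mul, hWW, hVV]
  ring

lemma det_cd_zero (hw : ∀ x ≤ L, 0 < w x) (hdeg : ∀ n ≤ L, (p n).degree = (n : ℕ))
    (hNL : N ≤ L + 1) {k : ℕ} (xs : Fin k → ℕ) (hxsL : ∀ i, xs i ≤ L) (hkN : N < k) :
    Matrix.det (Matrix.of fun i j : Fin k => cdKernel L N w p (xs i) (xs j)) = 0 := by
  classical
  set Φ : Matrix (Fin k) (Fin k) ℝ :=
    Matrix.of fun i n : Fin k => if (n : ℕ) < N then phi L w p (n : ℕ) (xs i) else 0 with hΦ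
  set Ψ : Matrix (Fin k) (Fin k) ℝ :=
    Matrix.of fun n j : Fin k => if (n : ℕ) < N then phi L w p (n : ℕ) (xs j) else 0 with hΨ
  have hM : (Matrix.of fun i j : Fin k => cdKernel L N w p (xs i) (xs j)) = Φ * Ψ := by
    ext i j
    rw [Matrix.mul_apply, Matrix.of_apply,
      cdKernel_eq L N w p hw hdeg hNL (hxsL i) (hxsL j)]
    have h1 : ∀ n : Fin k, Φ i n * Ψ n j
        = if (n : ℕ) < N then phi L w p (n : ℕ) (xs i) * phi L w p (n : ℕ) (xs j) else 0 := by
      intro n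
      by_cases h : (n : ℕ) < N <;> simp [hΦ, hΨ, h]
    rw [Finset.sum_congr rfl (fun n _ => h1 n),
      Fin.sum_univ_eq_sum_range
        (fun n => if n < N then phi L w p n (xs i) * phi L w p n (xs j) else 0) k]
    rw [← Finset.sum_filter]
    have h2 : (Finset.range k).filter (fun n => n < N) = Finset.range N := by
      ext n
      simp only [Finset.mem_filter, Finset.mem_range]
      omega
    rw [h2]
  rw [hM, Matrix.det_mul]
  have hzero : Φ.det = 0 := by
    apply Matrix.det_eq_zero_of_column_eq_zero (⟨N, hkN⟩ : Fin k)
    intro i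
    simp [hΦ]
  rw [hzero, zero_mul]

end OPE2
open OPEAux in
/-- Correlation functions of a discrete orthogonal polynomial ensemble on `{0,…,L}` are
determinants of the Christoffel–Darboux kernel. -/
theorem stmt_2 (L N : ℕ) (hN1 : 1 ≤ N) (hNL : N ≤ L + 1)
    (w : ℕ → ℝ) (hw : ∀ x ≤ L, 0 < w x)
    (p : ℕ → Polynomial ℝ) (hdeg : ∀ n ≤ L, (p n).degree = (n : ℕ))
    (horth : ∀ m ≤ L, ∀ n ≤ L, m ≠ n →
      ∑ x ∈ Finset.range (L + 1), w x * (p m).eval (x : ℝ) * (p n).eval (x : ℝ) = 0)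
    (k : ℕ) (xs : Fin k → ℕ) (hxs : StrictMono xs) (hxsL : ∀ i, xs i ≤ L) :
    (∑ A ∈ ((Finset.range (L + 1)).powersetCard N).filter (fun A => ∀ i, xs i ∈ A),
        opeWeight w A)
      / (∑ A ∈ (Finset.range (L + 1)).powersetCard N, opeWeight w A)
    = Matrix.det (Matrix.of fun i j : Fin k => cdKernel L N w p (xs i) (xs j)) := by
  classical
  have htr := cd_trace L N w p hw hdeg horth hNL
  have hproj := cd_proj L N w p hw hdeg horth hNL
  set c : ℝ := ∏ n ∈ Finset.range N, OPEAux.nu L w p n / (p n).leadingCoeff ^ 2 with hc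
  have hcpos : 0 < c := by
    refine Finset.prod_pos fun n hn => ?_
    have hnL : n ≤ L := by
      have := Finset.mem_range.mp hn
      omega
    exact div_pos (nu_pos L w p hw hdeg hnL)
      (pow_two_pos_of_ne_zero (lc_ne_zero L p hdeg hnL))
  have hweight : ∀ A ∈ (Finset.range (L + 1)).powersetCard N,
      opeWeight w A = c * OPEAux.detK (cdKernel L N w p) A := by
    intro A hA
    obtain ⟨hAS, hAc⟩ := Finset.mem_powersetCard.mp hA
    exact weight_eq L N w p hw hdeg hNL A hAS hAc
  have hdetKempty : OPEAux.detK (cdKernel L N w p) ∅ = 1 := by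
    unfold OPEAux.detK OPEAux.detT
    exact Matrix.det_fin_zero
  have hden : ∑ A ∈ (Finset.range (L + 1)).powersetCard N, opeWeight w A = c := by
    rw [Finset.sum_congr rfl hweight, ← Finset.mul_sum]
    have hf : ((Finset.range (L + 1)).powersetCard N).filter
        (fun A => (∅ : Finset ℕ) ⊆ A) = (Finset.range (L + 1)).powersetCard N :=
      Finset.filter_true_of_mem fun A _ => Finset.empty_subset A
    have hk0 := keyFinset (Finset.range (L + 1)) (cdKernel L N w p) N htr hproj N ∅
      (Finset.empty_subset _) (by simp)
    rw [hf] at hk0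
    rw [hk0, hdetKempty, mul_one]
  by_cases hkN : k ≤ N
  · set X : Finset ℕ := Finset.univ.image xs with hX
    have hXcard : X.card = k := by
      rw [hX, Finset.card_image_of_injective _ hxs.injective, Finset.card_univ,
        Fintype.card_fin]
    have hXS : X ⊆ Finset.range (L + 1) := by
      intro u hu
      obtain ⟨i, _, rfl⟩ := Finset.mem_image.mp hu
      exact Finset.mem_range.mpr (by have := hxsL i; omega)
    have hfiltereq : ((Finset.range (L + 1)).powersetCard N).filter
        (fun A => ∀ i, xs i ∈ A)
        = ((Finset.range (L + 1)).powersetCard N).filter (fun A => X ⊆ A) := by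
      refine Finset.filter_congr fun A _ => ?_
      rw [hX]
      simp [Finset.image_subset_iff]
    have hnum : ∑ A ∈ ((Finset.range (L + 1)).powersetCard N).filter
        (fun A => ∀ i, xs i ∈ A), opeWeight w A
        = c * OPEAux.detK (cdKernel L N w p) X := by
      rw [hfiltereq,
        Finset.sum_congr rfl (fun A hA => hweight A (Finset.mem_of_mem_filter A hA)),
        ← Finset.mul_sum,
        keyFinset (Finset.range (L + 1)) (cdKernel L N w p) N htr hproj (N - k) X hXS
          (by omega)]
    rw [hnum, hden, mul_comm c, mul_div_assoc, div_self hcpos.ne', mul_one]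
    exact (OPEAux.detT_eq_detK (cdKernel L N w p) xs hxs.injective X hX.symm).symm
  · push_neg at hkN
    have hempty : ((Finset.range (L + 1)).powersetCard N).filter
        (fun A => ∀ i, xs i ∈ A) = ∅ := by
      rw [Finset.filter_eq_empty_iff]
      intro A hA hall
      obtain ⟨hAS, hAc⟩ := Finset.mem_powersetCard.mp hA
      have hsub : Finset.univ.image xs ⊆ A :=
        Finset.image_subset_iff.mpr fun i _ => hall i
      have hcard := Finset.card_le_card hsub
      rw [Finset.card_image_of_injective _ hxs.injective, Finset.card_univ,
        Fintype.card_fin, hAc] at hcard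
      omega
    rw [hempty, Finset.sum_empty, zero_div]
    exact (det_cd_zero L N w p hw hdeg hNL xs hxsL hkN).symm
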